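/- Fix t < 1 and set λ_n = 1/(n−t). Let s = (s₁,…,s_l), s' be compositions with s₁ > 1, s'₁ > 1 and ξ, ξ' coefficient tuples with all partial products Π_{k≤i} ξ_k of modulus ≤ 1. Then the colored Hurwitz polyzetas Di(F_{ξ,t};s) = Σ_{n₁>…>n_l>0} Π ξ_i^{n_i}/(n_i − t)^{s_i} satisfy Di(F_{ξ,t};s)·Di(F_{ξ',t};s') = Di applied linearly to (s;ξ)⧈(s';ξ'): the product of two colored Hurwitz polyzetas with the same diagonal parameter t is the linear combination of colored Hurwitz polyzetas given by the duffle product. -/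

import Mathlib

open Finsupp Finset Filter

/-- A word `w` seen as an element of the free module `A⟨X⟩` (coefficient 1). -/
noncomputable def delta (A : Type*) [CommRing A] {X : Type*} (w : List X) : List X →₀ A :=
  Finsupp.single w 1

/-- Left concatenation by a letter, as a linear map on `A⟨X⟩`. -/
noncomputable def lcons (A : Type*) [CommRing A] {X : Type*} (x : X) :
    (List X →₀ A) →ₗ[A] (List X →₀ A) :=
  Finsupp.lmapDomain A A (List.cons x)

/-- Partial multiple sum `M^n_(s,ξ)(λ) = Σ_(n>n₁>…>n_r>0) Π ξ_i^(n_i) λ_(n_i)^(s_i)`, the word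
over `ℕ × ℂ` encoding the pair (composition, coefficient tuple). -/
noncomputable def Mpart (lam : ℕ → ℂ) : ℕ → List (ℕ × ℂ) → ℂ
  | _, [] => 1
  | n, p :: l => ∑ m ∈ Finset.Ioo 0 n, p.2 ^ m * lam m ^ p.1 * Mpart lam m l

namespace Stmt16Aux

noncomputable def lamF (t : ℝ) : ℕ → ℂ := fun m => 1 / ((m : ℂ) - (t : ℂ))

noncomputable def BC (t : ℝ) : ℝ := max 1 (1 - t)⁻¹

lemma one_le_BC (t : ℝ) : 1 ≤ BC t := le_max_left _ _

lemma BC_pos (t : ℝ) : 0 < BC t := lt_of_lt_of_le one_pos (one_le_BC t)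

lemma norm_lam_le {t : ℝ} (ht : t < 1) {m : ℕ} (hm : 1 ≤ m) : ‖lamF t m‖ ≤ BC t / m := by
  have hmt : (0:ℝ) < (m:ℝ) - t := by
    have : (1:ℝ) ≤ (m:ℝ) := by exact_mod_cast hm
    linarith
  have hcast : ((m:ℂ) - (t:ℂ)) = (((m:ℝ) - t : ℝ) : ℂ) := by push_cast; ring
  have hnorm : ‖lamF t m‖ = 1 / ((m:ℝ) - t) := by
    rw [lamF, hcast]
    rw [norm_div, Complex.norm_real]
    simp [abs_of_pos hmt]
  rw [hnorm]
  have hm0 : (0:ℝ) < (m:ℝ) := by positivity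
  rw [div_le_div_iff₀ hmt hm0]
  -- 1 * m ≤ BC t * (m - t)
  rcases le_or_gt t 0 with h0 | h0
  · have h1 : (1:ℝ) * m ≤ 1 * ((m:ℝ) - t) := by nlinarith
    calc (1:ℝ) * m ≤ 1 * ((m:ℝ) - t) := h1
    _ ≤ BC t * ((m:ℝ) - t) := by
        apply mul_le_mul_of_nonneg_right (one_le_BC t) (le_of_lt hmt)
  · have hB : (1 - t)⁻¹ ≤ BC t := le_max_right _ _
    have h1t : (0:ℝ) < 1 - t := by linarith
    have key : (1:ℝ) * m ≤ (1 - t)⁻¹ * ((m:ℝ) - t) := by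
      rw [one_mul, inv_mul_eq_div, le_div_iff₀ h1t]
      have : (1:ℝ) ≤ (m:ℝ) := by exact_mod_cast hm
      nlinarith
    calc (1:ℝ) * m ≤ (1 - t)⁻¹ * ((m:ℝ) - t) := key
    _ ≤ BC t * ((m:ℝ) - t) := mul_le_mul_of_nonneg_right hB (le_of_lt hmt)

lemma norm_lam_pow_le {t : ℝ} (ht : t < 1) {m s k : ℕ} (hm : 1 ≤ m) (hs : k ≤ s) (hk : 1 ≤ k) :
    ‖lamF t m ^ s‖ ≤ BC t ^ s / (m : ℝ) ^ k := by
  have hm0 : (0:ℝ) < (m:ℝ) := by positivity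
  have h1 : ‖lamF t m ^ s‖ = ‖lamF t m‖ ^ s := norm_pow _ _
  have h2 : ‖lamF t m‖ ^ s ≤ (BC t / m) ^ s := by
    apply pow_le_pow_left₀ (norm_nonneg _) (norm_lam_le ht hm)
  have h3 : (BC t / (m:ℝ)) ^ s = BC t ^ s / (m:ℝ) ^ s := div_pow _ _ _
  have h4 : (BC t:ℝ) ^ s / (m:ℝ) ^ s ≤ BC t ^ s / (m:ℝ) ^ k := by
    gcongr
    · exact le_of_lt (pow_pos (BC_pos t) s)
    · exact_mod_cast hm
  rw [h1]; rw [h3] at h2; linarith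

/-- partial products condition with carried constant -/
def PP (c : ℂ) (w : List (ℕ × ℂ)) : Prop :=
  ‖c‖ ≤ 1 ∧ ∀ i : ℕ, ‖c * ((w.take (i + 1)).map Prod.snd).prod‖ ≤ 1

lemma PP.tail {c : ℂ} {p : ℕ × ℂ} {l : List (ℕ × ℂ)} (h : PP c (p :: l)) : PP (c * p.2) l := by
  constructor
  · have := h.2 0
    simpa using this
  · intro i
    have := h.2 (i + 1)
    simpa [List.take_succ_cons, mul_assoc] using this

lemma PP.scale {c e : ℂ} {w : List (ℕ × ℂ)} (he : ‖e‖ ≤ 1) (h : PP c w) : PP (e * c) w := by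
  have key : ∀ x : ℂ, ‖c * x‖ ≤ 1 → ‖e * c * x‖ ≤ 1 := by
    intro x hx
    calc ‖e * c * x‖ = ‖e‖ * ‖c * x‖ := by rw [mul_assoc, norm_mul]
    _ ≤ 1 * 1 := mul_le_mul he hx (norm_nonneg _) (by linarith [norm_nonneg e])
    _ = 1 := one_mul 1
  exact ⟨by simpa using key 1 (by simpa using h.1), fun i => key _ (h.2 i)⟩

lemma log_mono_nat {m n : ℕ} (h : m ≤ n) : Real.log m ≤ Real.log n := by
  rcases Nat.eq_zero_or_pos m with rfl | hm
  · simp only [Nat.cast_zero, Real.log_zero]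
    rcases Nat.eq_zero_or_pos n with rfl | hn
    · simp
    · exact Real.log_natCast_nonneg n
  · exact Real.log_le_log (by exact_mod_cast hm) (by exact_mod_cast h)

lemma two_add_log_nonneg (n : ℕ) : (0:ℝ) ≤ 2 + Real.log n := by
  have := log_mono_nat (Nat.zero_le n)
  simp only [Nat.cast_zero, Real.log_zero] at this
  linarith

lemma sum_Ioo_one_div_le_aux (n : ℕ) :
    ∑ m ∈ Finset.Ioo 0 n, (1 / (m:ℝ)) ≤ 1 + Real.log (n - 1 : ℕ) := by
  induction n with
  | zero => simp
  | succ n ih =>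
    rcases Nat.eq_zero_or_pos n with rfl | hn
    · simp [show Finset.Ioo 0 1 = (∅ : Finset ℕ) from by decide]
    rw [show Finset.Ioo 0 (n+1) = insert n (Finset.Ioo 0 n) by
          ext x; simp only [Finset.mem_insert, Finset.mem_Ioo]; omega,
        Finset.sum_insert (by simp)]
    have hsimp : (n + 1 - 1 : ℕ) = n := by omega
    rw [hsimp]
    rcases Nat.lt_or_ge n 2 with h2 | h2
    · have : n = 1 := by omega
      subst this
      simp [show Finset.Ioo 0 1 = (∅ : Finset ℕ) from by decide]
    · have hn1 : (1:ℝ) ≤ ((n:ℝ) - 1) := by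
        have : (2:ℝ) ≤ (n:ℝ) := by exact_mod_cast h2
        linarith
      have hpos : (0:ℝ) < ((n:ℝ) - 1) / n := by positivity
      have hlog := Real.log_le_sub_one_of_pos hpos
      have hne : (n:ℝ) ≠ 0 := by positivity
      rw [Real.log_div (by linarith) hne] at hlog
      have hsub : ((n:ℝ) - 1) / (n:ℝ) - 1 = - (1 / n) := by field_simp; ring
      rw [hsub] at hlog
      have hcast : ((n - 1 : ℕ) : ℝ) = (n:ℝ) - 1 := by
        have : 1 ≤ n := by omega
        push_cast [this]; ring
      rw [hcast] at ih
      linarith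

lemma sum_Ioo_one_div_le (n : ℕ) : ∑ m ∈ Finset.Ioo 0 n, (1 / (m:ℝ)) ≤ 1 + Real.log n := by
  calc ∑ m ∈ Finset.Ioo 0 n, (1 / (m:ℝ)) ≤ 1 + Real.log (n - 1 : ℕ) := sum_Ioo_one_div_le_aux n
  _ ≤ 1 + Real.log n := by linarith [log_mono_nat (Nat.sub_le n 1)]



lemma mpart_bound {t : ℝ} (ht : t < 1) :
    ∀ (w : List (ℕ × ℂ)) (c : ℂ), (∀ p ∈ w, 1 ≤ p.1) → PP c w → ∀ n : ℕ,
      ‖c ^ n * Mpart (lamF t) n w‖ ≤ BC t ^ ((w.map Prod.fst).sum) * (2 + Real.log n) ^ w.length := by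
  intro w
  induction w with
  | nil =>
    intro c _ hPP n
    simp only [Mpart, mul_one, List.map_nil, List.sum_nil, pow_zero, List.length_nil]
    calc ‖c ^ n‖ = ‖c‖ ^ n := norm_pow _ _
    _ ≤ 1 ^ n := pow_le_pow_left₀ (norm_nonneg _) hPP.1 n
    _ = 1 := one_pow n
  | cons p l ih =>
    intro c hpos hPP n
    have hc1 : ‖c‖ ≤ 1 := hPP.1
    have hPPt : PP (c * p.2) l := hPP.tail
    have hposl : ∀ q ∈ l, 1 ≤ q.1 := fun q hq => hpos q (List.mem_cons_of_mem p hq)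
    have hp1 : 1 ≤ p.1 := hpos p List.mem_cons_self
    simp only [Mpart, List.map_cons, List.sum_cons, List.length_cons]
    rw [Finset.mul_sum]
    calc ‖∑ m ∈ Finset.Ioo 0 n, c ^ n * (p.2 ^ m * lamF t m ^ p.1 * Mpart (lamF t) m l)‖
        ≤ ∑ m ∈ Finset.Ioo 0 n, ‖c ^ n * (p.2 ^ m * lamF t m ^ p.1 * Mpart (lamF t) m l)‖ :=
          norm_sum_le _ _
      _ ≤ ∑ m ∈ Finset.Ioo 0 n,
            (BC t ^ p.1 * (BC t ^ ((l.map Prod.fst).sum) * (2 + Real.log n) ^ l.length)) * (1/m) := by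
          apply Finset.sum_le_sum
          intro m hm
          rw [Finset.mem_Ioo] at hm
          obtain ⟨hm0, hmn⟩ := hm
          have hsplit : c ^ n * (p.2 ^ m * lamF t m ^ p.1 * Mpart (lamF t) m l)
              = (c ^ (n - m)) * (lamF t m ^ p.1) * ((c * p.2) ^ m * Mpart (lamF t) m l) := by
            rw [mul_pow]
            rw [show c ^ (n-m) * lamF t m ^ p.1 * (c^m * p.2^m * Mpart (lamF t) m l)
                  = (c ^ (n-m) * c ^ m) * (p.2^m * lamF t m ^ p.1 * Mpart (lamF t) m l) by ring]
            rw [← pow_add]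
            rw [Nat.sub_add_cancel (le_of_lt hmn)]
          rw [hsplit]
          rw [norm_mul, norm_mul]
          have e1 : ‖c ^ (n - m)‖ ≤ 1 := by
            rw [norm_pow]
            exact pow_le_one₀ (norm_nonneg _) hc1
          have e2 : ‖lamF t m ^ p.1‖ ≤ BC t ^ p.1 / m :=
            norm_lam_pow_le ht hm0 hp1 le_rfl |>.trans (by rw [pow_one])
          have e3 : ‖(c * p.2) ^ m * Mpart (lamF t) m l‖
              ≤ BC t ^ ((l.map Prod.fst).sum) * (2 + Real.log m) ^ l.length :=
            ih (c * p.2) hposl hPPt m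
          have e3' : ‖(c * p.2) ^ m * Mpart (lamF t) m l‖
              ≤ BC t ^ ((l.map Prod.fst).sum) * (2 + Real.log n) ^ l.length := by
            refine e3.trans ?_
            apply mul_le_mul_of_nonneg_left _ (pow_nonneg (BC_pos t).le _)
            exact pow_le_pow_left₀ (two_add_log_nonneg m) (by linarith [log_mono_nat (le_of_lt hmn)]) _
          calc ‖c ^ (n-m)‖ * ‖lamF t m ^ p.1‖ * ‖(c*p.2)^m * Mpart (lamF t) m l‖
              ≤ 1 * (BC t ^ p.1 / m) * (BC t ^ ((l.map Prod.fst).sum) * (2 + Real.log n) ^ l.length) := by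
                apply mul_le_mul _ e3' (norm_nonneg _)
                  (mul_nonneg zero_le_one (div_nonneg (pow_nonneg (BC_pos t).le _) (Nat.cast_nonneg m)))
                exact mul_le_mul e1 e2 (norm_nonneg _) zero_le_one
            _ = (BC t ^ p.1 * (BC t ^ ((l.map Prod.fst).sum) * (2 + Real.log n) ^ l.length)) * (1/m) := by
                ring
      _ = (BC t ^ p.1 * (BC t ^ ((l.map Prod.fst).sum) * (2 + Real.log n) ^ l.length))
            * ∑ m ∈ Finset.Ioo 0 n, (1/(m:ℝ)) := by rw [← Finset.mul_sum]
      _ ≤ BC t ^ (p.1 + (l.map Prod.fst).sum) * (2 + Real.log n) ^ (l.length + 1) := by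
          have hs := sum_Ioo_one_div_le n
          have h2l : (1:ℝ) + Real.log n ≤ 2 + Real.log n := by linarith
          have hnonneg : (0:ℝ) ≤ ∑ m ∈ Finset.Ioo 0 n, (1/(m:ℝ)) := by positivity
          calc (BC t ^ p.1 * (BC t ^ ((l.map Prod.fst).sum) * (2 + Real.log n) ^ l.length))
                * ∑ m ∈ Finset.Ioo 0 n, (1/(m:ℝ))
              ≤ (BC t ^ p.1 * (BC t ^ ((l.map Prod.fst).sum) * (2 + Real.log n) ^ l.length))
                * (2 + Real.log n) := by
                apply mul_le_mul_of_nonneg_left (by linarith)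
                  (mul_nonneg (pow_nonneg (BC_pos t).le _)
                    (mul_nonneg (pow_nonneg (BC_pos t).le _) (pow_nonneg (two_add_log_nonneg n) _)))
            _ = BC t ^ (p.1 + (l.map Prod.fst).sum) * (2 + Real.log n) ^ (l.length + 1) := by
                rw [pow_add, pow_succ]; ring


lemma summable_log_pow (k : ℕ) : Summable (fun m : ℕ => (2 + Real.log m) ^ k / (m:ℝ) ^ 2) := by
  have hr : (0:ℝ) < 1 / (2 * ((k:ℝ)+1)) := by positivity
  have hlog : Real.log =o[atTop] fun x : ℝ => x ^ (1 / (2 * ((k:ℝ)+1))) :=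
    isLittleO_log_rpow_atTop hr
  have hconst : (fun _ : ℝ => (2:ℝ)) =o[atTop] fun x : ℝ => x ^ (1 / (2 * ((k:ℝ)+1))) := by
    rw [Asymptotics.isLittleO_const_left]
    right
    have h1 : Tendsto (fun x : ℝ => x ^ (1 / (2 * ((k:ℝ)+1)))) atTop atTop :=
      tendsto_rpow_atTop hr
    exact tendsto_abs_atTop_atTop.comp h1
  have hsum : (fun x : ℝ => 2 + Real.log x) =o[atTop] fun x : ℝ => x ^ (1 / (2 * ((k:ℝ)+1))) :=
    hconst.add hlog
  have hpow : (fun x : ℝ => (2 + Real.log x) ^ (k+1)) =o[atTop]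
      fun x : ℝ => (x ^ (1 / (2 * ((k:ℝ)+1)))) ^ (k+1) :=
    hsum.pow (Nat.succ_pos k)
  have hhalf : (fun x : ℝ => (2 + Real.log x) ^ (k+1)) =o[atTop]
      fun x : ℝ => x ^ ((1:ℝ)/2) := by
    refine hpow.trans_eventuallyEq ?_
    filter_upwards [eventually_ge_atTop (0:ℝ)] with x hx
    rw [← Real.rpow_natCast (x ^ (1 / (2 * ((k:ℝ)+1)))) (k+1), ← Real.rpow_mul hx]
    congr 1
    push_cast
    field_simp
  -- tendsto of ratio
  have hten : Tendsto (fun x : ℝ => (2 + Real.log x) ^ (k+1) / x ^ ((1:ℝ)/2)) atTop (nhds 0) :=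
    hhalf.tendsto_div_nhds_zero
  have htenN : Tendsto (fun m : ℕ => (2 + Real.log m) ^ (k+1) / (m:ℝ) ^ ((1:ℝ)/2)) atTop (nhds 0) :=
    hten.comp tendsto_natCast_atTop_atTop
  -- summability for exponent k+1
  have hS : Summable (fun m : ℕ => (2 + Real.log m) ^ (k+1) / (m:ℝ) ^ 2) := by
    apply summable_of_isBigO_nat (g := fun m : ℕ => (m:ℝ) ^ (-(3/2) : ℝ))
      (Real.summable_nat_rpow.2 (by norm_num))
    refine Asymptotics.isBigO_of_div_tendsto_nhds ?_ 0 ?_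
    · filter_upwards [eventually_ge_atTop 1] with m hm
      intro h0
      exfalso
      have hm0 : (0:ℝ) < (m:ℝ) := by exact_mod_cast Nat.lt_of_lt_of_le Nat.zero_lt_one hm
      exact (Real.rpow_pos_of_pos hm0 _).ne' h0
    · apply htenN.congr'
      filter_upwards [eventually_ge_atTop 1] with m hm
      have hm0 : (0:ℝ) < (m:ℝ) := by exact_mod_cast Nat.lt_of_lt_of_le Nat.zero_lt_one hm
      simp only [Pi.div_apply]
      rw [Real.rpow_neg hm0.le]
      have key : ((m:ℝ)^(2:ℕ)) = (m:ℝ)^((1:ℝ)/2) * (m:ℝ)^((3:ℝ)/2) := by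
        rw [← Real.rpow_add hm0, ← Real.rpow_natCast (m:ℝ) 2]
        norm_num
      have hX : (m:ℝ)^((1:ℝ)/2) ≠ 0 := (Real.rpow_pos_of_pos hm0 _).ne'
      have hY : (m:ℝ)^((3:ℝ)/2) ≠ 0 := (Real.rpow_pos_of_pos hm0 _).ne'
      rw [show (3:ℝ)/2 = 3/2 from rfl] at *
      rw [key]
      field_simp
  -- compare exponents k and k+1
  apply hS.of_nonneg_of_le
  · intro m
    exact div_nonneg (pow_nonneg (two_add_log_nonneg m) _) (by positivity)
  · intro m
    rcases Nat.eq_zero_or_pos m with rfl | hm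
    · simp
    · have hm0 : (0:ℝ) < (m:ℝ)^2 := by positivity
      rw [div_le_div_iff₀ hm0 hm0]
      have h1 : (1:ℝ) ≤ 2 + Real.log m := by
        have := log_mono_nat (Nat.zero_le m)
        simp only [Nat.cast_zero, Real.log_zero] at this
        linarith
      have := pow_le_pow_right₀ h1 (Nat.le_succ k)
      exact mul_le_mul_of_nonneg_right this hm0.le

lemma mpart_tendsto {t : ℝ} (ht : t < 1) (w : List (ℕ × ℂ)) (hne : w ≠ [])
    (hhead : 2 ≤ w.headI.1) (hpos : ∀ p ∈ w, 1 ≤ p.1) (hPP : PP 1 w) :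
    ∃ L : ℂ, Tendsto (fun n => Mpart (lamF t) n w) atTop (nhds L) := by
  obtain ⟨p, l, rfl⟩ : ∃ p l, w = p :: l := by
    cases w with
    | nil => exact absurd rfl hne
    | cons p l => exact ⟨p, l, rfl⟩
  have hp2 : 2 ≤ p.1 := hhead
  have hposl : ∀ q ∈ l, 1 ≤ q.1 := fun q hq => hpos q (List.mem_cons_of_mem p hq)
  have hPPl : PP p.2 l := by
    have := hPP.tail
    rwa [one_mul] at this
  set f : ℕ → ℂ := fun m => p.2 ^ m * lamF t m ^ p.1 * Mpart (lamF t) m l with hf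
  set g : ℕ → ℂ := fun m => if m = 0 then 0 else f m with hg
  have hsum : Summable g := by
    apply Summable.of_norm_bounded
      (g := fun m : ℕ => (BC t ^ p.1 * BC t ^ ((l.map Prod.fst).sum)) * ((2 + Real.log m) ^ l.length / (m:ℝ) ^ 2))
      (((summable_log_pow l.length).mul_left _))
    intro m
    rcases Nat.eq_zero_or_pos m with rfl | hm
    · simp [hg]
    · have hgm : g m = f m := by simp [hg, Nat.pos_iff_ne_zero.1 hm]
      rw [hgm, hf]
      have e1 : ‖lamF t m ^ p.1‖ ≤ BC t ^ p.1 / (m:ℝ)^2 :=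
        norm_lam_pow_le ht hm hp2 (by norm_num)
      have e2 : ‖p.2 ^ m * Mpart (lamF t) m l‖
          ≤ BC t ^ ((l.map Prod.fst).sum) * (2 + Real.log m) ^ l.length :=
        mpart_bound ht l p.2 hposl hPPl m
      calc ‖p.2 ^ m * lamF t m ^ p.1 * Mpart (lamF t) m l‖
          = ‖lamF t m ^ p.1‖ * ‖p.2 ^ m * Mpart (lamF t) m l‖ := by
            rw [← norm_mul]; ring_nf
        _ ≤ (BC t ^ p.1 / (m:ℝ)^2) * (BC t ^ ((l.map Prod.fst).sum) * (2 + Real.log m) ^ l.length) := by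
            apply mul_le_mul e1 e2 (norm_nonneg _)
              (div_nonneg (pow_nonneg (BC_pos t).le _) (by positivity))
        _ = (BC t ^ p.1 * BC t ^ ((l.map Prod.fst).sum)) * ((2 + Real.log m) ^ l.length / (m:ℝ) ^ 2) := by
            ring
  obtain ⟨S, hS⟩ := hsum
  refine ⟨S, ?_⟩
  have hten := hS.tendsto_sum_nat
  apply hten.congr
  intro n
  show ∑ i ∈ Finset.range n, g i = Mpart (lamF t) n (p :: l)
  have : Mpart (lamF t) n (p :: l) = ∑ m ∈ Finset.Ioo 0 n, f m := rfl
  rw [this]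
  rw [← Finset.sum_subset (Finset.Ioo_subset_Ioo_left (Nat.zero_le 0) |>.trans ?_)]
  · apply Finset.sum_congr rfl
    intro x hx
    rw [Finset.mem_Ioo] at hx
    simp [hg, Nat.pos_iff_ne_zero.1 hx.1]
  · intro x hx hnx
    rw [Finset.mem_range] at hx
    rw [Finset.mem_Ioo] at hnx
    have : x = 0 := by omega
    simp [hg, this]
  · intro x hx
    rw [Finset.mem_Ioo] at hx
    rw [Finset.mem_range]
    exact hx.2

lemma PP.cons_of {c d x : ℂ} {s : ℕ} {w : List (ℕ × ℂ)}
    (hcd : ‖c * d‖ ≤ 1) (h : PP (c * d * x) w) : PP (c * d) ((s, x) :: w) := by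
  refine ⟨hcd, fun i => ?_⟩
  cases i with
  | zero =>
    simpa [mul_assoc] using h.1
  | succ i =>
    have := h.2 i
    simpa [List.take_succ_cons, mul_assoc] using this

section Star

variable (star : (List (ℕ × ℂ) →₀ ℂ) →ₗ[ℂ] (List (ℕ × ℂ) →₀ ℂ) →ₗ[ℂ] (List (ℕ × ℂ) →₀ ℂ))
variable (hunitl : ∀ w : List (ℕ × ℂ), star (delta ℂ []) (delta ℂ w) = delta ℂ w)
variable (hunitr : ∀ w : List (ℕ × ℂ), star (delta ℂ w) (delta ℂ []) = delta ℂ w)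
variable (hrec : ∀ (a b : (ℕ × ℂ)) (u v : List (ℕ × ℂ)),
      star (delta ℂ (a :: u)) (delta ℂ (b :: v)) =
        lcons ℂ a (star (delta ℂ u) (delta ℂ (b :: v)))
          + lcons ℂ b (star (delta ℂ (a :: u)) (delta ℂ v))
          + lcons ℂ (a.1 + b.1, a.2 * b.2) (star (delta ℂ u) (delta ℂ v)))

include hunitl hunitr hrec in
lemma supp_good : ∀ (N : ℕ) (u v : List (ℕ × ℂ)), u.length + v.length ≤ N →
    ∀ c d : ℂ, (∀ p ∈ u, 1 ≤ p.1) → (∀ p ∈ v, 1 ≤ p.1) → PP c u → PP d v →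
    ∀ w ∈ (star (delta ℂ u) (delta ℂ v)).support, (∀ p ∈ w, 1 ≤ p.1) ∧ PP (c * d) w := by
  intro N
  induction N with
  | zero =>
    intro u v hlen c d hu hv hc hd w hw
    have hu0 : u = [] := List.length_eq_zero_iff.1 (by omega)
    have hv0 : v = [] := List.length_eq_zero_iff.1 (by omega)
    subst hu0; subst hv0
    rw [hunitl] at hw
    have : w = [] := by
      have := Finsupp.support_single_subset hw
      simpa using this
    subst this
    exact ⟨by simp, PP.scale hc.1 hd⟩
  | succ N ih =>
    intro u v hlen c d hu hv hc hd w hw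
    match u, v with
    | [], v =>
      rw [hunitl] at hw
      have : w = v := by
        have := Finsupp.support_single_subset hw
        simpa using this
      subst this
      exact ⟨hv, PP.scale hc.1 hd⟩
    | (a :: u), [] =>
      rw [hunitr] at hw
      have : w = a :: u := by
        have := Finsupp.support_single_subset hw
        simpa using this
      subst this
      refine ⟨hu, ?_⟩
      rw [mul_comm]
      exact PP.scale hd.1 hc
    | (a :: u), (b :: v) =>
      rw [hrec] at hw
      have hcd : ‖c * d‖ ≤ 1 := by
        rw [norm_mul]
        exact mul_le_one₀ hc.1 (norm_nonneg _) hd.1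
      have hw' := Finsupp.support_add hw
      rw [Finset.mem_union] at hw'
      have husub : ∀ p ∈ u, 1 ≤ p.1 := fun p hp => hu p (List.mem_cons_of_mem a hp)
      have hvsub : ∀ p ∈ v, 1 ≤ p.1 := fun p hp => hv p (List.mem_cons_of_mem b hp)
      have ha1 : 1 ≤ a.1 := hu a List.mem_cons_self
      have hb1 : 1 ≤ b.1 := hv b List.mem_cons_self
      rcases hw' with hw' | hw'
      · have hw'' := Finsupp.support_add hw'
        rw [Finset.mem_union] at hw''
        rcases hw'' with hw'' | hw''
        · -- w ∈ support (lcons a (star u (b::v)))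
          rw [lcons, Finsupp.lmapDomain_apply] at hw''
          obtain ⟨w', hw's, hww'⟩ := Finset.mem_image.1 (Finsupp.mapDomain_support hw'')
          subst hww'
          obtain ⟨hwpos, hwPP⟩ := ih u (b :: v) (by simp at hlen ⊢; omega) (c * a.2) d
            husub hv hc.tail hd w' hw's
          refine ⟨?_, ?_⟩
          · intro p hp
            rcases List.mem_cons.1 hp with rfl | hp
            · exact ha1
            · exact hwpos p hp
          · have : c * a.2 * d = c * d * a.2 := by ring
            rw [this] at hwPP
            exact PP.cons_of hcd hwPP
        · -- w ∈ support (lcons b (star (a::u) v))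
          rw [lcons, Finsupp.lmapDomain_apply] at hw''
          obtain ⟨w', hw's, hww'⟩ := Finset.mem_image.1 (Finsupp.mapDomain_support hw'')
          subst hww'
          obtain ⟨hwpos, hwPP⟩ := ih (a :: u) v (by simp at hlen ⊢; omega) c (d * b.2)
            hu hvsub hc hd.tail w' hw's
          refine ⟨?_, ?_⟩
          · intro p hp
            rcases List.mem_cons.1 hp with rfl | hp
            · exact hb1
            · exact hwpos p hp
          · have : c * (d * b.2) = c * d * b.2 := by ring
            rw [this] at hwPP
            exact PP.cons_of hcd hwPP
      · -- w ∈ support (lcons (a.1+b.1, a.2*b.2) (star u v))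
        rw [lcons, Finsupp.lmapDomain_apply] at hw'
        obtain ⟨w', hw's, hww'⟩ := Finset.mem_image.1 (Finsupp.mapDomain_support hw')
        subst hww'
        obtain ⟨hwpos, hwPP⟩ := ih u v (by simp at hlen ⊢; omega) (c * a.2) (d * b.2)
          husub hvsub hc.tail hd.tail w' hw's
        refine ⟨?_, ?_⟩
        · intro p hp
          rcases List.mem_cons.1 hp with rfl | hp
          · simp; omega
          · exact hwpos p hp
        · have : c * a.2 * (d * b.2) = c * d * (a.2 * b.2) := by ring
          rw [this] at hwPP
          exact PP.cons_of hcd hwPP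


lemma sum_mul_sum_Ioo (F G : ℕ → ℂ) (n : ℕ) :
    (∑ m ∈ Finset.Ioo 0 n, F m) * (∑ m ∈ Finset.Ioo 0 n, G m) =
      (∑ m ∈ Finset.Ioo 0 n, F m * ∑ j ∈ Finset.Ioo 0 m, G j)
      + (∑ m ∈ Finset.Ioo 0 n, G m * ∑ j ∈ Finset.Ioo 0 m, F j)
      + ∑ m ∈ Finset.Ioo 0 n, F m * G m := by
  induction n with
  | zero => simp
  | succ n ih =>
    rcases Nat.eq_zero_or_pos n with rfl | hn
    · simp [show Finset.Ioo 0 1 = (∅ : Finset ℕ) from by decide]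
    have hins : Finset.Ioo 0 (n+1) = insert n (Finset.Ioo 0 n) := by
      ext x; simp only [Finset.mem_insert, Finset.mem_Ioo]; omega
    have hnot : n ∉ Finset.Ioo 0 n := by simp
    simp only [hins, Finset.sum_insert hnot]
    linear_combination ih

lemma lc_sum_swap (X : List (ℕ × ℂ) →₀ ℂ) (s : Finset ℕ) (c : ℕ → ℂ)
    (v : ℕ → List (ℕ × ℂ) → ℂ) :
    ∑ m ∈ s, c m * (Finsupp.linearCombination ℂ (v m) X)
      = Finsupp.linearCombination ℂ (fun w => ∑ m ∈ s, c m * v m w) X := by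
  simp only [Finsupp.linearCombination_apply, Finsupp.sum, smul_eq_mul, Finset.mul_sum]
  rw [Finset.sum_comm]
  apply Finset.sum_congr rfl
  intro w _
  apply Finset.sum_congr rfl
  intro m _
  ring

include hunitl hunitr hrec in
lemma stuffle_identity (lam : ℕ → ℂ) : ∀ (N : ℕ) (u v : List (ℕ × ℂ)),
    u.length + v.length ≤ N → ∀ n : ℕ,
    Mpart lam n u * Mpart lam n v
      = Finsupp.linearCombination ℂ (Mpart lam n) (star (delta ℂ u) (delta ℂ v)) := by
  intro N
  induction N with
  | zero =>
    intro u v hlen n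
    have hu0 : u = [] := List.length_eq_zero_iff.1 (by omega)
    have hv0 : v = [] := List.length_eq_zero_iff.1 (by omega)
    subst hu0; subst hv0
    rw [hunitl, delta, Finsupp.linearCombination_single]
    simp [Mpart]
  | succ N ih =>
    intro u v hlen n
    match u, v with
    | [], v =>
      rw [hunitl, delta, Finsupp.linearCombination_single]
      simp [Mpart]
    | (a :: u), [] =>
      rw [hunitr, delta, Finsupp.linearCombination_single]
      simp [Mpart]
    | (a :: u), (b :: v) =>
      have hlen1 : u.length + (b :: v).length ≤ N := by simp at hlen ⊢; omega
      have hlen2 : (a :: u).length + v.length ≤ N := by simp at hlen ⊢; omega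
      have hlen3 : u.length + v.length ≤ N := by simp at hlen ⊢; omega
      have hM1 : Mpart lam n (a :: u)
          = ∑ m ∈ Finset.Ioo 0 n, a.2 ^ m * lam m ^ a.1 * Mpart lam m u := rfl
      have hM2 : Mpart lam n (b :: v)
          = ∑ m ∈ Finset.Ioo 0 n, b.2 ^ m * lam m ^ b.1 * Mpart lam m v := rfl
      rw [hM1, hM2, sum_mul_sum_Ioo]
      have hT1 : (∑ m ∈ Finset.Ioo 0 n, (a.2 ^ m * lam m ^ a.1 * Mpart lam m u)
            * ∑ j ∈ Finset.Ioo 0 m, b.2 ^ j * lam j ^ b.1 * Mpart lam j v)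
          = Finsupp.linearCombination ℂ (Mpart lam n)
              (lcons ℂ a (star (delta ℂ u) (delta ℂ (b :: v)))) := by
        have e : ∀ m ∈ Finset.Ioo 0 n, (a.2 ^ m * lam m ^ a.1 * Mpart lam m u)
              * ∑ j ∈ Finset.Ioo 0 m, b.2 ^ j * lam j ^ b.1 * Mpart lam j v
            = (a.2 ^ m * lam m ^ a.1) * Finsupp.linearCombination ℂ (Mpart lam m)
                (star (delta ℂ u) (delta ℂ (b :: v))) := by
          intro m _
          rw [← ih u (b :: v) hlen1 m]
          rw [show Mpart lam m (b :: v)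
              = ∑ j ∈ Finset.Ioo 0 m, b.2 ^ j * lam j ^ b.1 * Mpart lam j v from rfl]
          ring
        rw [Finset.sum_congr rfl e, lc_sum_swap]
        rw [lcons, Finsupp.lmapDomain_apply, Finsupp.linearCombination_mapDomain]
        rfl
      have hT2 : (∑ m ∈ Finset.Ioo 0 n, (b.2 ^ m * lam m ^ b.1 * Mpart lam m v)
            * ∑ j ∈ Finset.Ioo 0 m, a.2 ^ j * lam j ^ a.1 * Mpart lam j u)
          = Finsupp.linearCombination ℂ (Mpart lam n)
              (lcons ℂ b (star (delta ℂ (a :: u)) (delta ℂ v))) := by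
        have e : ∀ m ∈ Finset.Ioo 0 n, (b.2 ^ m * lam m ^ b.1 * Mpart lam m v)
              * ∑ j ∈ Finset.Ioo 0 m, a.2 ^ j * lam j ^ a.1 * Mpart lam j u
            = (b.2 ^ m * lam m ^ b.1) * Finsupp.linearCombination ℂ (Mpart lam m)
                (star (delta ℂ (a :: u)) (delta ℂ v)) := by
          intro m _
          rw [← ih (a :: u) v hlen2 m]
          rw [show Mpart lam m (a :: u)
              = ∑ j ∈ Finset.Ioo 0 m, a.2 ^ j * lam j ^ a.1 * Mpart lam j u from rfl]
          ring
        rw [Finset.sum_congr rfl e, lc_sum_swap]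
        rw [lcons, Finsupp.lmapDomain_apply, Finsupp.linearCombination_mapDomain]
        rfl
      have hT3 : (∑ m ∈ Finset.Ioo 0 n, (a.2 ^ m * lam m ^ a.1 * Mpart lam m u)
            * (b.2 ^ m * lam m ^ b.1 * Mpart lam m v))
          = Finsupp.linearCombination ℂ (Mpart lam n)
              (lcons ℂ (a.1 + b.1, a.2 * b.2) (star (delta ℂ u) (delta ℂ v))) := by
        have e : ∀ m ∈ Finset.Ioo 0 n, (a.2 ^ m * lam m ^ a.1 * Mpart lam m u)
              * (b.2 ^ m * lam m ^ b.1 * Mpart lam m v)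
            = ((a.2 * b.2) ^ m * lam m ^ (a.1 + b.1)) * Finsupp.linearCombination ℂ (Mpart lam m)
                (star (delta ℂ u) (delta ℂ v)) := by
          intro m _
          rw [← ih u v hlen3 m, mul_pow, pow_add]
          ring
        rw [Finset.sum_congr rfl e, lc_sum_swap]
        rw [lcons, Finsupp.lmapDomain_apply, Finsupp.linearCombination_mapDomain]
        rfl
      rw [hT1, hT2, hT3, hrec a b u v]
      simp only [map_add]

include hunitl hunitr hrec in
lemma supp_shape {w₁ w₂ : List (ℕ × ℂ)} (h₁ne : w₁ ≠ []) (h₂ne : w₂ ≠ [])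
    (h₁head : 2 ≤ w₁.headI.1) (h₂head : 2 ≤ w₂.headI.1) :
    ∀ u ∈ (star (delta ℂ w₁) (delta ℂ w₂)).support, u ≠ [] ∧ 2 ≤ u.headI.1 := by
  obtain ⟨a, u₁, rfl⟩ : ∃ a u₁, w₁ = a :: u₁ := by
    cases w₁ with
    | nil => exact absurd rfl h₁ne
    | cons a u₁ => exact ⟨a, u₁, rfl⟩
  obtain ⟨b, v₂, rfl⟩ : ∃ b v₂, w₂ = b :: v₂ := by
    cases w₂ with
    | nil => exact absurd rfl h₂ne
    | cons b v₂ => exact ⟨b, v₂, rfl⟩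
  have ha2 : 2 ≤ a.1 := h₁head
  have hb2 : 2 ≤ b.1 := h₂head
  intro u hu
  rw [hrec] at hu
  have hu' := Finsupp.support_add hu
  rw [Finset.mem_union] at hu'
  rcases hu' with hu' | hu'
  · have hu'' := Finsupp.support_add hu'
    rw [Finset.mem_union] at hu''
    rcases hu'' with hu'' | hu''
    · rw [lcons, Finsupp.lmapDomain_apply] at hu''
      obtain ⟨w', _, hww'⟩ := Finset.mem_image.1 (Finsupp.mapDomain_support hu'')
      subst hww'
      exact ⟨by simp, ha2⟩
    · rw [lcons, Finsupp.lmapDomain_apply] at hu''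
      obtain ⟨w', _, hww'⟩ := Finset.mem_image.1 (Finsupp.mapDomain_support hu'')
      subst hww'
      exact ⟨by simp, hb2⟩
  · rw [lcons, Finsupp.lmapDomain_apply] at hu'
    obtain ⟨w', _, hww'⟩ := Finset.mem_image.1 (Finsupp.mapDomain_support hu')
    subst hww'
    refine ⟨by simp, ?_⟩
    show 2 ≤ a.1 + b.1
    omega

end Star

end Stmt16Aux

open Stmt16Aux in
/-- with `λ_n = 1/(n−t)`, `t < 1`, and two convergent encodings
(first exponent `> 1`, all exponents `≥ 1`, all partial products of the colors of modulus
`≤ 1`), the colored Hurwitz polyzêtas `Di(F_(ξ,t);s) = lim_n M^n` exist and satisfy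
`Di(F_(ξ,t);s) · Di(F_(ξ',t);s') = Di((s;ξ) ⧈ (s';ξ'))` (duffle relation, same diagonal
parameter `t`). -/
theorem stmt16 (t : ℝ) (ht : t < 1)
    (star : (List (ℕ × ℂ) →₀ ℂ) →ₗ[ℂ] (List (ℕ × ℂ) →₀ ℂ) →ₗ[ℂ] (List (ℕ × ℂ) →₀ ℂ))
    (hunitl : ∀ w : List (ℕ × ℂ), star (delta ℂ []) (delta ℂ w) = delta ℂ w)
    (hunitr : ∀ w : List (ℕ × ℂ), star (delta ℂ w) (delta ℂ []) = delta ℂ w)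
    (hrec : ∀ (a b : (ℕ × ℂ)) (u v : List (ℕ × ℂ)),
      star (delta ℂ (a :: u)) (delta ℂ (b :: v)) =
        lcons ℂ a (star (delta ℂ u) (delta ℂ (b :: v)))
          + lcons ℂ b (star (delta ℂ (a :: u)) (delta ℂ v))
          + lcons ℂ (a.1 + b.1, a.2 * b.2) (star (delta ℂ u) (delta ℂ v)))
    (w₁ w₂ : List (ℕ × ℂ)) (h₁ne : w₁ ≠ []) (h₂ne : w₂ ≠ [])
    (h₁head : 2 ≤ w₁.headI.1) (h₂head : 2 ≤ w₂.headI.1)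
    (h₁pos : ∀ p ∈ w₁, 1 ≤ p.1) (h₂pos : ∀ p ∈ w₂, 1 ≤ p.1)
    (h₁E : ∀ i : ℕ, ‖(((w₁.take (i + 1)).map Prod.snd).prod)‖ ≤ 1)
    (h₂E : ∀ i : ℕ, ‖(((w₂.take (i + 1)).map Prod.snd).prod)‖ ≤ 1) :
    ∃ D : List (ℕ × ℂ) → ℂ,
      Filter.Tendsto (fun n => Mpart (fun m => 1 / ((m : ℂ) - (t : ℂ))) n w₁)
          Filter.atTop (nhds (D w₁)) ∧
      Filter.Tendsto (fun n => Mpart (fun m => 1 / ((m : ℂ) - (t : ℂ))) n w₂)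
          Filter.atTop (nhds (D w₂)) ∧
      (∀ u ∈ (star (delta ℂ w₁) (delta ℂ w₂)).support,
        Filter.Tendsto (fun n => Mpart (fun m => 1 / ((m : ℂ) - (t : ℂ))) n u)
          Filter.atTop (nhds (D u))) ∧
      D w₁ * D w₂ = (star (delta ℂ w₁) (delta ℂ w₂)).sum (fun u c => c * D u) := by
  have hlam : (fun m : ℕ => 1 / ((m : ℂ) - (t : ℂ))) = lamF t := rfl
  rw [hlam]
  set D : List (ℕ × ℂ) → ℂ := fun w => limUnder atTop (fun n => Mpart (lamF t) n w) with hD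
  have hPP1 : PP 1 w₁ := ⟨by norm_num, fun i => by simpa using h₁E i⟩
  have hPP2 : PP 1 w₂ := ⟨by norm_num, fun i => by simpa using h₂E i⟩
  have hconv : ∀ w : List (ℕ × ℂ), w ≠ [] → 2 ≤ w.headI.1 → (∀ p ∈ w, 1 ≤ p.1) → PP 1 w →
      Tendsto (fun n => Mpart (lamF t) n w) atTop (nhds (D w)) := by
    intro w hne hhead hpos hPP
    obtain ⟨L, hL⟩ := mpart_tendsto ht w hne hhead hpos hPP
    have : D w = L := hL.limUnder_eq
    rw [this]
    exact hL
  have conv₁ := hconv w₁ h₁ne h₁head h₁pos hPP1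
  have conv₂ := hconv w₂ h₂ne h₂head h₂pos hPP2
  have convU : ∀ u ∈ (star (delta ℂ w₁) (delta ℂ w₂)).support,
      Tendsto (fun n => Mpart (lamF t) n u) atTop (nhds (D u)) := by
    intro u hu
    obtain ⟨hune, huhead⟩ := supp_shape star hunitl hunitr hrec h₁ne h₂ne h₁head h₂head u hu
    obtain ⟨hupos, huPP⟩ := supp_good star hunitl hunitr hrec (w₁.length + w₂.length) w₁ w₂
      le_rfl 1 1 h₁pos h₂pos hPP1 hPP2 u hu
    rw [one_mul] at huPP
    exact hconv u hune huhead hupos huPP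
  refine ⟨D, conv₁, conv₂, convU, ?_⟩
  have key := stuffle_identity star hunitl hunitr hrec (lamF t)
    (w₁.length + w₂.length) w₁ w₂ le_rfl
  set S := star (delta ℂ w₁) (delta ℂ w₂) with hS
  have hRHS : Tendsto (fun n => ∑ u ∈ S.support, S u * Mpart (lamF t) n u) atTop
      (nhds (∑ u ∈ S.support, S u * D u)) := by
    apply tendsto_finset_sum
    intro u hu
    exact (convU u hu).const_mul (S u)
  have hLHS : Tendsto (fun n => Mpart (lamF t) n w₁ * Mpart (lamF t) n w₂) atTop
      (nhds (D w₁ * D w₂)) := conv₁.mul conv₂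
  have heq : (fun n => Mpart (lamF t) n w₁ * Mpart (lamF t) n w₂)
      = fun n => ∑ u ∈ S.support, S u * Mpart (lamF t) n u := by
    funext n
    rw [key n]
    simp only [Finsupp.linearCombination_apply, Finsupp.sum, smul_eq_mul]
  rw [heq] at hLHS
  have hfinal : D w₁ * D w₂ = ∑ u ∈ S.support, S u * D u :=
    tendsto_nhds_unique hLHS hRHS
  rw [hfinal]
  rfl
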